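/- Let d = 3 and let n ≥ 7 be an integer. Then for every real number α with 0 ≤ α ≤ n/3 and every choice of sign ε ∈ {+1, −1}, writing z = −α + ε·√2·n·i, one has |f_{n,1}(z)| / |f_{n,0}(z)| < n·(1/2)^{(n−1)/2} ≤ 7/8 and |f_{n,2}(z)| / |f_{n,0}(z)| < (n(n−1)/2)·(1/6)^{(n−1)/2} ≤ 7/72; in particular |f_{n,1}(z)| + |f_{n,2}(z)| < |f_{n,0}(z)|. (Here f_{n,0}(z) ≠ 0 since each factor 3·z + j has imaginary part ±3√2·n ≠ 0.) -/

import Mathlib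

/-- `f_{n,s}(z) = C(n,s) · ∏_{j=1}^{n−1} ((d−s)·z + j − s)`. -/
noncomputable def hyperF (d n s : ℕ) (z : ℂ) : ℂ :=
  (n.choose s : ℂ) * ∏ j ∈ Finset.Icc 1 (n - 1), (((d : ℂ) - (s : ℂ)) * z + (j : ℂ) - (s : ℂ))

private lemma natBound1 : ∀ m : ℕ, 6 ≤ m → 64 * (m + 1)^2 ≤ 49 * 2^m := by
  intro m hm
  induction m, hm using Nat.le_induction with
  | base => norm_num
  | succ m hm ih =>
    have h1 : 64 * (m + 1 + 1)^2 ≤ 2 * (64 * (m + 1)^2) := by nlinarith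
    calc 64 * (m + 1 + 1)^2 ≤ 2 * (64 * (m + 1)^2) := h1
      _ ≤ 2 * (49 * 2^m) := by omega
      _ = 49 * 2^(m+1) := by ring

private lemma natBound2 : ∀ m : ℕ, 6 ≤ m → 1296 * ((m + 1) * m)^2 ≤ 49 * 6^m := by
  intro m hm
  induction m, hm using Nat.le_induction with
  | base => norm_num
  | succ m hm ih =>
    have h1 : 1296 * ((m + 2) * (m + 1))^2 ≤ 6 * (1296 * ((m + 1) * m)^2) := by nlinarith
    calc 1296 * ((m + 1 + 1) * (m + 1))^2 = 1296 * ((m + 2) * (m + 1))^2 := by ring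
      _ ≤ 6 * (1296 * ((m + 1) * m)^2) := h1
      _ ≤ 6 * (49 * 6^m) := by omega
      _ = 49 * 6^(m+1) := by ring

private lemma pos_of_sq_pos {a : ℝ} (h1 : 0 ≤ a) (h2 : 0 < a^2) : 0 < a := by
  rcases h1.lt_or_eq with h | h
  · exact h
  · exfalso; rw [← h] at h2; simp at h2

set_option maxHeartbeats 1000000 in
theorem stmt_17 (n : ℕ) (hn : 7 ≤ n) (α : ℝ) (hα0 : 0 ≤ α) (hα1 : α ≤ (n : ℝ) / 3)
    (ε : ℝ) (hε : ε = 1 ∨ ε = -1) :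
    ‖hyperF 3 n 1 (-(α : ℂ) + (ε : ℂ) * (Real.sqrt 2 : ℂ) * n * Complex.I)‖ /
          ‖hyperF 3 n 0 (-(α : ℂ) + (ε : ℂ) * (Real.sqrt 2 : ℂ) * n * Complex.I)‖ <
        (n : ℝ) * (1 / 2 : ℝ) ^ (((n : ℝ) - 1) / 2) ∧
      (n : ℝ) * (1 / 2 : ℝ) ^ (((n : ℝ) - 1) / 2) ≤ 7 / 8 ∧
      ‖hyperF 3 n 2 (-(α : ℂ) + (ε : ℂ) * (Real.sqrt 2 : ℂ) * n * Complex.I)‖ /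
          ‖hyperF 3 n 0 (-(α : ℂ) + (ε : ℂ) * (Real.sqrt 2 : ℂ) * n * Complex.I)‖ <
        ((n : ℝ) * ((n : ℝ) - 1) / 2) * (1 / 6 : ℝ) ^ (((n : ℝ) - 1) / 2) ∧
      ((n : ℝ) * ((n : ℝ) - 1) / 2) * (1 / 6 : ℝ) ^ (((n : ℝ) - 1) / 2) ≤ 7 / 72 ∧
      ‖hyperF 3 n 1 (-(α : ℂ) + (ε : ℂ) * (Real.sqrt 2 : ℂ) * n * Complex.I)‖ +
          ‖hyperF 3 n 2 (-(α : ℂ) + (ε : ℂ) * (Real.sqrt 2 : ℂ) * n * Complex.I)‖ <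
        ‖hyperF 3 n 0 (-(α : ℂ) + (ε : ℂ) * (Real.sqrt 2 : ℂ) * n * Complex.I)‖ := by
  have hn1 : (1:ℕ) ≤ n := by omega
  have hnR : (7:ℝ) ≤ (n:ℝ) := by exact_mod_cast hn
  have hn0 : (0:ℝ) < (n:ℝ) := by linarith
  have hnm : ((n - 1 : ℕ) : ℝ) = (n:ℝ) - 1 := by
    rw [Nat.cast_sub hn1]; norm_num
  set u : ℝ := Real.sqrt (1/2) with hu
  set v : ℝ := Real.sqrt (1/6) with hv
  have hu0 : 0 < u := Real.sqrt_pos.mpr (by norm_num)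
  have hv0 : 0 < v := Real.sqrt_pos.mpr (by norm_num)
  have hu2 : u^2 = 1/2 := Real.sq_sqrt (by norm_num)
  have hv2 : v^2 = 1/6 := Real.sq_sqrt (by norm_num)
  have hupow : (1/2:ℝ) ^ (((n:ℝ) - 1)/2) = u ^ (n-1) := by
    rw [hu, ← hnm, show ((n-1:ℕ):ℝ)/2 = (1/2 : ℝ) * ((n-1:ℕ):ℝ) by ring,
      Real.rpow_mul (by norm_num), Real.rpow_natCast, Real.sqrt_eq_rpow]
  have hvpow : (1/6:ℝ) ^ (((n:ℝ) - 1)/2) = v ^ (n-1) := by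
    rw [hv, ← hnm, show ((n-1:ℕ):ℝ)/2 = (1/2 : ℝ) * ((n-1:ℕ):ℝ) by ring,
      Real.rpow_mul (by norm_num), Real.rpow_natCast, Real.sqrt_eq_rpow]
  set z : ℂ := -(α : ℂ) + (ε : ℂ) * (Real.sqrt 2 : ℂ) * n * Complex.I with hzdef
  set y : ℝ := ε * Real.sqrt 2 * n with hydef
  have hε2 : ε^2 = 1 := by rcases hε with h | h <;> rw [h] <;> norm_num
  have hy2 : y^2 = 2 * (n:ℝ)^2 := by
    rw [hydef, mul_pow, mul_pow, hε2, Real.sq_sqrt (by norm_num : (0:ℝ) ≤ 2)]; ring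
  have hre : z.re = -α := by simp [hzdef]
  have him : z.im = y := by simp [hzdef, hydef]
  have habs : ∀ (c r : ℝ), (‖(c:ℂ) * z + (r:ℂ)‖)^2
      = (r - c*α)^2 + c^2 * (2 * (n:ℝ)^2) := by
    intro c r
    rw [Complex.sq_norm, Complex.normSq_apply]
    simp only [Complex.add_re, Complex.add_im, Complex.mul_re, Complex.mul_im,
      Complex.ofReal_re, Complex.ofReal_im, hre, him]
    linear_combination (c^2) * hy2
  -- the absolute value of each factor
  set G : ℕ → ℕ → ℝ := fun s j => ‖((3:ℂ) - (s:ℂ)) * z + (j:ℂ) - (s:ℂ)‖ with hG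
  have hGsq : ∀ (s j : ℕ), (G s j)^2
      = (((j:ℝ) - (s:ℝ)) - (3 - (s:ℝ))*α)^2 + (3 - (s:ℝ))^2 * (2 * (n:ℝ)^2) := by
    intro s j
    have hfac : ((3:ℂ) - (s:ℂ)) * z + (j:ℂ) - (s:ℂ)
        = (((3 - (s:ℝ)):ℝ):ℂ) * z + ((((j:ℝ) - (s:ℝ)):ℝ):ℂ) := by
      push_cast; ring
    rw [hG]; simp only; rw [hfac, habs]
  have hyper_eq : ∀ s : ℕ, ‖hyperF 3 n s z‖
      = (n.choose s : ℝ) * ∏ j ∈ Finset.Icc 1 (n-1), G s j := by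
    intro s
    rw [hyperF, norm_mul, Complex.norm_natCast, norm_prod]
    simp only [hG, Nat.cast_ofNat]
  -- positivity of each factor
  have hGpos : ∀ s : ℕ, s ≤ 2 → ∀ j : ℕ, 0 < G s j := by
    intro s hs j
    apply pos_of_sq_pos (norm_nonneg _)
    rw [hGsq]
    have hs3 : 1 ≤ 3 - (s:ℝ) := by
      have : (s:ℝ) ≤ 2 := by exact_mod_cast hs
      linarith
    have h33 : 1 ≤ (3 - (s:ℝ))^2 := by nlinarith
    nlinarith [sq_nonneg (((j:ℝ) - (s:ℝ)) - (3 - (s:ℝ))*α), mul_pos hn0 hn0, h33]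
  -- key per-factor inequalities
  have key1 : ∀ j ∈ Finset.Icc 1 (n-1), G 1 j < u * G 0 j := by
    intro j hj
    rw [Finset.mem_Icc] at hj
    have hj1 : (1:ℝ) ≤ (j:ℝ) := by exact_mod_cast hj.1
    have hj2 : (j:ℝ) ≤ (n:ℝ) - 1 := by rw [← hnm]; exact_mod_cast hj.2
    apply lt_of_pow_lt_pow_left₀ 2 (by positivity)
    rw [mul_pow, hu2, hGsq, hGsq]
    push_cast
    have hA : 0 < (n:ℝ) - (j:ℝ) + 1 + 2*α := by linarith
    have hB : 0 < (n:ℝ) + (j:ℝ) - 1 - 2*α := by linarith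
    have hX : ((j:ℝ) - 1 - 2*α)^2 < (n:ℝ)^2 := by nlinarith [mul_pos hA hB]
    nlinarith [hX, sq_nonneg ((j:ℝ) - 3*α)]
  have key2 : ∀ j ∈ Finset.Icc 1 (n-1), G 2 j < v * G 0 j := by
    intro j hj
    rw [Finset.mem_Icc] at hj
    have hj1 : (1:ℝ) ≤ (j:ℝ) := by exact_mod_cast hj.1
    have hj2 : (j:ℝ) ≤ (n:ℝ) - 1 := by rw [← hnm]; exact_mod_cast hj.2
    apply lt_of_pow_lt_pow_left₀ 2 (by positivity)
    rw [mul_pow, hv2, hGsq, hGsq]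
    push_cast
    have hA : 0 < (n:ℝ) - (j:ℝ) + 2 + α := by linarith
    have hB : 0 < (n:ℝ) + (j:ℝ) - 2 - α := by linarith
    have hX : ((j:ℝ) - 2 - α)^2 < (n:ℝ)^2 := by nlinarith [mul_pos hA hB]
    nlinarith [hX, sq_nonneg ((j:ℝ) - 3*α)]
  have hne : (Finset.Icc 1 (n-1)).Nonempty := Finset.nonempty_Icc.mpr (by omega)
  have hcard : (Finset.Icc 1 (n-1)).card = n - 1 := by
    rw [Nat.card_Icc]; omega
  set P0 : ℝ := ∏ j ∈ Finset.Icc 1 (n-1), G 0 j with hP0def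
  have hP0 : 0 < P0 := Finset.prod_pos (fun j _ => hGpos 0 (by norm_num) j)
  have hprod1 : (∏ j ∈ Finset.Icc 1 (n-1), G 1 j) < u^(n-1) * P0 := by
    have h := Finset.prod_lt_prod_of_nonempty
      (f := fun j => G 1 j) (g := fun j => u * G 0 j)
      (fun j _ => hGpos 1 (by norm_num) j) key1 hne
    rwa [Finset.prod_mul_distrib, Finset.prod_const, hcard] at h
  have hprod2 : (∏ j ∈ Finset.Icc 1 (n-1), G 2 j) < v^(n-1) * P0 := by
    have h := Finset.prod_lt_prod_of_nonempty
      (f := fun j => G 2 j) (g := fun j => v * G 0 j)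
      (fun j _ => hGpos 2 (by norm_num) j) key2 hne
    rwa [Finset.prod_mul_distrib, Finset.prod_const, hcard] at h
  have hyper0 : ‖hyperF 3 n 0 z‖ = P0 := by
    rw [hyper_eq 0, Nat.choose_zero_right]; norm_num; rfl
  have hb1 : ‖hyperF 3 n 1 z‖ < (n:ℝ) * u^(n-1) * P0 := by
    rw [hyper_eq 1, Nat.choose_one_right]
    calc (n:ℝ) * ∏ j ∈ Finset.Icc 1 (n-1), G 1 j
        < (n:ℝ) * (u^(n-1) * P0) := by
          exact mul_lt_mul_of_pos_left hprod1 hn0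
      _ = (n:ℝ) * u^(n-1) * P0 := by ring
  have hchoose2 : (n.choose 2 : ℝ) = (n:ℝ) * ((n:ℝ) - 1) / 2 := by
    rw [Nat.choose_two_right]
    rw [Nat.cast_div (by exact Nat.even_mul_pred_self n |>.two_dvd) (by norm_num)]
    rw [Nat.cast_mul, hnm]; ring
  have hb2 : ‖hyperF 3 n 2 z‖
      < ((n:ℝ) * ((n:ℝ) - 1) / 2) * v^(n-1) * P0 := by
    rw [hyper_eq 2, hchoose2]
    have hc0 : (0:ℝ) < (n:ℝ) * ((n:ℝ) - 1) / 2 := by nlinarith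
    calc ((n:ℝ) * ((n:ℝ) - 1) / 2) * ∏ j ∈ Finset.Icc 1 (n-1), G 2 j
        < ((n:ℝ) * ((n:ℝ) - 1) / 2) * (v^(n-1) * P0) :=
          mul_lt_mul_of_pos_left hprod2 hc0
      _ = ((n:ℝ) * ((n:ℝ) - 1) / 2) * v^(n-1) * P0 := by ring
  -- numeric bounds
  have hB1 : (n:ℝ) * u^(n-1) ≤ 7/8 := by
    have hnat := natBound1 (n-1) (by omega)
    rw [show n - 1 + 1 = n by omega] at hnat
    have hcast : (64:ℝ) * (n:ℝ)^2 ≤ 49 * 2^(n-1) := by exact_mod_cast hnat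
    have hinv : ((1:ℝ)/2)^(n-1) * 2^(n-1) = 1 := by rw [← mul_pow]; norm_num
    have ht0 : (0:ℝ) ≤ ((1:ℝ)/2)^(n-1) := by positivity
    have hsq : ((n:ℝ) * u^(n-1))^2 ≤ (7/8:ℝ)^2 := by
      rw [mul_pow, ← pow_mul, mul_comm (n-1) 2, pow_mul, hu2]
      nlinarith [mul_le_mul_of_nonneg_right hcast ht0, hinv]
    exact le_of_pow_le_pow_left₀ two_ne_zero (by norm_num) hsq
  have hB2 : ((n:ℝ) * ((n:ℝ) - 1) / 2) * v^(n-1) ≤ 7/72 := by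
    have hnat := natBound2 (n-1) (by omega)
    rw [show n - 1 + 1 = n by omega] at hnat
    have hcast : (1296:ℝ) * ((n:ℝ) * ((n:ℝ) - 1))^2 ≤ 49 * 6^(n-1) := by
      have := (Nat.cast_le (α := ℝ)).mpr hnat
      push_cast [hnm] at this
      convert this using 2 <;> push_cast [hnm] <;> ring
    have hinv : ((1:ℝ)/6)^(n-1) * 6^(n-1) = 1 := by rw [← mul_pow]; norm_num
    have ht0 : (0:ℝ) ≤ ((1:ℝ)/6)^(n-1) := by positivity
    have hsq : (((n:ℝ) * ((n:ℝ) - 1) / 2) * v^(n-1))^2 ≤ (7/72:ℝ)^2 := by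
      rw [mul_pow, ← pow_mul, mul_comm (n-1) 2, pow_mul, hv2]
      nlinarith [mul_le_mul_of_nonneg_right hcast ht0, hinv]
    have hc0 : (0:ℝ) ≤ ((n:ℝ) * ((n:ℝ) - 1) / 2) * v^(n-1) :=
      mul_nonneg (by nlinarith) (pow_nonneg hv0.le _)
    exact le_of_pow_le_pow_left₀ two_ne_zero (by norm_num) hsq
  refine ⟨?_, ?_, ?_, ?_, ?_⟩
  · rw [hyper0, div_lt_iff₀ hP0, hupow]
    exact hb1
  · rw [hupow]; exact hB1
  · rw [hyper0, div_lt_iff₀ hP0, hvpow]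
    exact hb2
  · rw [hvpow]; exact hB2
  · rw [hyper0]
    have h1 : ‖hyperF 3 n 1 z‖ < (7/8) * P0 :=
      lt_of_lt_of_le hb1 (mul_le_mul_of_nonneg_right hB1 hP0.le)
    have h2 : ‖hyperF 3 n 2 z‖ < (7/72) * P0 :=
      lt_of_lt_of_le hb2 (mul_le_mul_of_nonneg_right hB2 hP0.le)
    linarith
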